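/- Let Π₅ be symmetric, R symmetric positive definite, K, Π₂₁, Π₁₃ matrices with Π₁₃ invertible, and Σ̄ˣ symmetric positive definite. If the block matrix [[Π₅, R^{1/2} K Π₂₁], [(R^{1/2} K Π₂₁)ᵀ, Π₁₃ + Π₁₃ᵀ − Σ̄ˣ]] is positive semidefinite, then with G = Π₂₁ Π₁₃⁻¹ we have Π₅ ⪰ R^{1/2} K G Σ̄ˣ Gᵀ Kᵀ R^{1/2}, and consequently trace(Π₅) ≥ trace(Kᵀ R K G Σ̄ˣ Gᵀ). -/

import Mathlib

open Matrix

lemma psd_trace_nonneg {k : ℕ} {A : Matrix (Fin k) (Fin k) ℝ} (hA : A.PosSemidef) :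
    0 ≤ A.trace := by
  have h : ∀ i, 0 ≤ A i i := by
    intro i
    exact hA.diag_nonneg
  exact Finset.sum_nonneg fun i _ => h i

/-- LMI reformulation of the LQR constraint: if
`[[P5, R^{1/2} K P21], [(R^{1/2} K P21)ᵀ, P13 + P13ᵀ − Sx]] ⪰ 0` with `P5` symmetric,
`R ≻ 0` with positive definite square root `Rhalf`, `P13` invertible, and `Sx ≻ 0`
symmetric, then with `G = P21 P13⁻¹` we have `P5 ⪰ R^{1/2} K G Sx Gᵀ Kᵀ R^{1/2}`, and
consequently `trace(P5) ≥ trace(Kᵀ R K G Sx Gᵀ)`.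
(`P5`, `P21`, `P13` play the roles of `Π₅`, `Π₂₁`, `Π₁₃`, and `Sx` that of `Σ̄ˣ`.) -/
theorem stmt_16 {m n : ℕ} (P5 : Matrix (Fin m) (Fin m) ℝ)
    (R Rhalf : Matrix (Fin m) (Fin m) ℝ)
    (K : Matrix (Fin m) (Fin n) ℝ) (P21 P13 Sx : Matrix (Fin n) (Fin n) ℝ)
    (hP5 : P5.IsHermitian) (hR : R.PosDef) (hRhalf : Rhalf.PosDef)
    (hRhalfsq : Rhalf * Rhalf = R) (hP13 : IsUnit P13) (hSx : Sx.PosDef)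
    (hblk : (fromBlocks P5 (Rhalf * K * P21) (Rhalf * K * P21)ᵀ
        (P13 + P13ᵀ - Sx)).PosSemidef) :
    (P5 - Rhalf * K * (P21 * P13⁻¹) * Sx * (P21 * P13⁻¹)ᵀ * Kᵀ * Rhalf).PosSemidef ∧
      (Kᵀ * R * K * (P21 * P13⁻¹) * Sx * (P21 * P13⁻¹)ᵀ).trace ≤ P5.trace := by
  classical
  have hdet : IsUnit P13.det := (Matrix.isUnit_iff_isUnit_det P13).mp hP13
  have hSxdet : IsUnit Sx.det := (Matrix.isUnit_iff_isUnit_det Sx).mp hSx.isUnit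
  have hSxT : Sxᵀ = Sx := by
    have := hSx.isHermitian
    rwa [Matrix.IsHermitian, conjTranspose_eq_transpose_of_trivial] at this
  have hRhT : Rhalfᵀ = Rhalf := by
    have := hRhalf.isHermitian
    rwa [Matrix.IsHermitian, conjTranspose_eq_transpose_of_trivial] at this
  have hSxInvMul : Sx⁻¹ * Sx = 1 := Matrix.nonsing_inv_mul _ hSxdet
  have hSxMulInv : Sx * Sx⁻¹ = 1 := Matrix.mul_nonsing_inv _ hSxdet
  -- cancellation helpers
  have hc1 : ∀ Z : Matrix (Fin n) (Fin m) ℝ, Sx * (Sx⁻¹ * Z) = Z := fun Z => by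
    rw [← Matrix.mul_assoc, hSxMulInv, Matrix.one_mul]
  have hc2 : ∀ Z : Matrix (Fin n) (Fin m) ℝ, Sx⁻¹ * (Sx * Z) = Z := fun Z => by
    rw [← Matrix.mul_assoc, hSxInvMul, Matrix.one_mul]
  -- abbreviations
  set G : Matrix (Fin n) (Fin n) ℝ := P21 * P13⁻¹ with hGdef
  set Y : Matrix (Fin n) (Fin m) ℝ := P13⁻¹ * Sx * Gᵀ * Kᵀ * Rhalf with hYdef
  set B : Matrix (Fin m) (Fin n) ℝ := Rhalf * K * P21 with hBdef
  set D : Matrix (Fin n) (Fin n) ℝ := P13 + P13ᵀ - Sx with hDdef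
  set T : Matrix (Fin m) (Fin m) ℝ := Rhalf * K * G * Sx * Gᵀ * Kᵀ * Rhalf with hTdef
  set X : Matrix (Fin m ⊕ Fin n) (Fin m) ℝ := fromRows (1 : Matrix (Fin m) (Fin m) ℝ) (-Y)
    with hXdef
  clear_value G Y B D T X
  -- congruence of the block matrix by X = fromRows 1 (-Y)
  have hS : (Xᴴ * fromBlocks P5 B Bᵀ D * X).PosSemidef :=
    hblk.conjTranspose_mul_mul_same X
  have hXH : Xᴴ = Xᵀ := conjTranspose_eq_transpose_of_trivial X
  have hXval : Xᴴ * fromBlocks P5 B Bᵀ D * X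
      = P5 - B * Y - Yᵀ * Bᵀ + Yᵀ * (D * Y) := by
    rw [hXH, hXdef, Matrix.mul_assoc, fromBlocks_mul_fromRows, transpose_fromRows,
      fromCols_mul_fromRows]
    simp only [Matrix.transpose_one, Matrix.transpose_neg, Matrix.mul_one, Matrix.one_mul,
      Matrix.mul_neg, Matrix.neg_mul, Matrix.mul_add, Matrix.mul_assoc, neg_neg]
    abel
  -- the PSD correction term
  have hSxinvPSD : (Sx⁻¹).PosSemidef := hSx.inv.posSemidef
  have hE : (((P13 - Sx) * Y)ᴴ * Sx⁻¹ * ((P13 - Sx) * Y)).PosSemidef :=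
    hSxinvPSD.conjTranspose_mul_mul_same _
  -- key algebraic identities
  have hP13Y : P13 * Y = Sx * Gᵀ * Kᵀ * Rhalf := by
    rw [hYdef, show P13 * (P13⁻¹ * Sx * Gᵀ * Kᵀ * Rhalf)
        = P13 * P13⁻¹ * (Sx * Gᵀ * Kᵀ * Rhalf) from by simp only [Matrix.mul_assoc],
      Matrix.mul_nonsing_inv _ hdet, Matrix.one_mul]
  have hBY : B * Y = T := by
    rw [hBdef, hYdef, hTdef, show Rhalf * K * P21 * (P13⁻¹ * Sx * Gᵀ * Kᵀ * Rhalf)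
        = Rhalf * K * (P21 * P13⁻¹) * Sx * Gᵀ * Kᵀ * Rhalf from by
      simp only [Matrix.mul_assoc], ← hGdef]
  have hTsymm : Tᵀ = T := by
    rw [hTdef]
    simp only [Matrix.transpose_mul, Matrix.transpose_transpose, hSxT, hRhT]
    simp only [Matrix.mul_assoc]
  have hYB : Yᵀ * Bᵀ = T := by
    rw [← Matrix.transpose_mul, hBY, hTsymm]
  -- quadratic terms combine to T
  have hexp : D * Y + (P13 - Sx)ᵀ * (Sx⁻¹ * ((P13 - Sx) * Y))
      = P13ᵀ * (Sx⁻¹ * (P13 * Y)) := by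
    rw [hDdef]
    simp only [Matrix.transpose_sub, hSxT, Matrix.sub_mul, Matrix.add_mul, Matrix.mul_sub,
      hc1, hc2]
    abel
  have hquad : Yᵀ * (D * Y) + ((P13 - Sx) * Y)ᵀ * Sx⁻¹ * ((P13 - Sx) * Y) = T := by
    calc Yᵀ * (D * Y) + ((P13 - Sx) * Y)ᵀ * Sx⁻¹ * ((P13 - Sx) * Y)
        = Yᵀ * (D * Y + (P13 - Sx)ᵀ * (Sx⁻¹ * ((P13 - Sx) * Y))) := by
          rw [Matrix.transpose_mul (P13 - Sx) Y, Matrix.mul_add]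
          simp only [Matrix.mul_assoc]
      _ = Yᵀ * P13ᵀ * (Sx⁻¹ * (P13 * Y)) := by rw [hexp, Matrix.mul_assoc]
      _ = (P13 * Y)ᵀ * (Sx⁻¹ * (P13 * Y)) := by rw [Matrix.transpose_mul P13 Y]
      _ = T := by
          rw [hP13Y, show Sx * Gᵀ * Kᵀ * Rhalf = Sx * (Gᵀ * (Kᵀ * Rhalf)) from by
            simp only [Matrix.mul_assoc], hc2 (Gᵀ * (Kᵀ * Rhalf)), hTdef]
          simp only [Matrix.transpose_mul, Matrix.transpose_transpose, hSxT, hRhT]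
          simp only [Matrix.mul_assoc]
  -- assemble
  have hPSD : (P5 - T).PosSemidef := by
    have hsum := hS.add hE
    have heq : Xᴴ * fromBlocks P5 B Bᵀ D * X
        + ((P13 - Sx) * Y)ᴴ * Sx⁻¹ * ((P13 - Sx) * Y) = P5 - T := by
      rw [hXval, conjTranspose_eq_transpose_of_trivial]
      rw [hBY, hYB]
      linear_combination (norm := abel) hquad
    rwa [heq] at hsum
  refine ⟨hPSD, ?_⟩
  have htr : (Kᵀ * R * K * G * Sx * Gᵀ).trace = T.trace := by
    rw [hTdef, ← hRhalfsq]
    rw [show Kᵀ * (Rhalf * Rhalf) * K * G * Sx * Gᵀ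
        = Kᵀ * Rhalf * (Rhalf * K * G * Sx * Gᵀ) from by simp only [Matrix.mul_assoc],
      Matrix.trace_mul_comm,
      show Rhalf * K * G * Sx * Gᵀ * (Kᵀ * Rhalf)
        = Rhalf * K * G * Sx * Gᵀ * Kᵀ * Rhalf from by simp only [Matrix.mul_assoc]]
  rw [htr]
  have h0 := psd_trace_nonneg hPSD
  rw [Matrix.trace_sub] at h0
  linarith
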